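/- Consider the semi-discrete CND finite difference scheme d/dt U_j(t) = -(1/Δx)(F_{j+1/2} - F_{j-1/2}) with numerical flux F_{j+1/2} = F*(U_j, U_{j+1}) - (c/2) B(U(V̂_{j+1/2}))(U_{j+1} - U_j), where F* is an entropy conservative flux, c ≥ 0 is a constant, and for each interface there exists an averaged state V̂_{j+1/2}(t) with U_{j+1} - U_j = U_V(V̂_{j+1/2})(V(U_{j+1}) - V(U_j)). Then every C¹ solution (U_j)_{j∈ℤ} of the scheme satisfies the exact discrete entropy balance d/dt S(U_j(t)) + (Q̂_{j+1/2} - Q̂_{j-1/2})/Δx = -(c/(4Δx))[⟨V(U_{j+1})-V(U_j), B(U(V̂_{j+1/2})) U_V(V̂_{j+1/2})(V(U_{j+1})-V(U_j))⟩ + ⟨V(U_j)-V(U_{j-1}), B(U(V̂_{j-1/2})) U_V(V̂_{j-1/2})(V(U_j)-V(U_{j-1}))⟩], where Q̂_{j+1/2} = ⟨(V(U_j)+V(U_{j+1}))/2, F*(U_j,U_{j+1})⟩ - (Ψ(U_j)+Ψ(U_{j+1}))/2 - (c/2)⟨(V(U_j)+V(U_{j+1}))/2, B(U(V̂_{j+1/2}))(U_{j+1}-U_j)⟩.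 -/

import Mathlib

open scoped RealInnerProductSpace

/-- The semi-discrete CND scheme, built from an entropy conservative flux `F*` and
the numerical diffusion operator `(c/2) B(U(V̂_{j+1/2})) (U_{j+1} - U_j)`, satisfies an
exact discrete entropy balance: the entropy production is given by the two
quadratic interface terms. -/
theorem cnd_scheme_discrete_entropy_balance (m : ℕ) (Δx c : ℝ)
    (hΔx : 0 < Δx) (hc : 0 ≤ c)
    -- entropy, entropy flux and flux of the system
    (S Q : EuclideanSpace ℝ (Fin m) → ℝ)
    (F : EuclideanSpace ℝ (Fin m) → EuclideanSpace ℝ (Fin m))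
    -- entropy variables `V = ∇S`
    (V : EuclideanSpace ℝ (Fin m) → EuclideanSpace ℝ (Fin m))
    (hV : ∀ u, HasGradientAt S (V u) u)
    -- inverse map `v ↦ U(v)` of the entropy variables, with Jacobian `U_V`
    (Umap : EuclideanSpace ℝ (Fin m) → EuclideanSpace ℝ (Fin m))
    (hUmap : ∀ u, Umap (V u) = u)
    (UV : EuclideanSpace ℝ (Fin m) → (EuclideanSpace ℝ (Fin m) →L[ℝ] EuclideanSpace ℝ (Fin m)))
    (hUV : ∀ v, HasFDerivAt Umap (UV v) v)
    -- an arbitrary viscosity matrix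
    (B : EuclideanSpace ℝ (Fin m) → (EuclideanSpace ℝ (Fin m) →L[ℝ] EuclideanSpace ℝ (Fin m)))
    -- entropy potential
    (Ψ : EuclideanSpace ℝ (Fin m) → ℝ)
    (hΨ : ∀ u, Ψ u = ⟪V u, F u⟫ - Q u)
    -- entropy conservative numerical flux
    (Fstar : EuclideanSpace ℝ (Fin m) → EuclideanSpace ℝ (Fin m) → EuclideanSpace ℝ (Fin m))
    (hEC : ∀ a b, ⟪V b - V a, Fstar a b⟫ = Ψ b - Ψ a)
    -- a C¹ solution of the semi-discrete scheme
    (U : ℤ → ℝ → EuclideanSpace ℝ (Fin m))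
    (hC1 : ∀ j, ContDiff ℝ 1 (U j))
    -- averaged states `V̂_{j+1/2}` at each interface
    (Vhat : ℤ → ℝ → EuclideanSpace ℝ (Fin m))
    (hVhat : ∀ j t, U (j + 1) t - U j t
      = UV (Vhat j t) (V (U (j + 1) t) - V (U j t)))
    -- the CND numerical flux `F_{j+1/2}`
    (Flux : ℤ → ℝ → EuclideanSpace ℝ (Fin m))
    (hFlux : ∀ j t, Flux j t = Fstar (U j t) (U (j + 1) t)
      - (c / 2) • (B (Umap (Vhat j t))) (U (j + 1) t - U j t))
    -- the semi-discrete scheme `d/dt U_j = -(1/Δx)(F_{j+1/2} - F_{j-1/2})`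
    (hscheme : ∀ j t, HasDerivAt (U j) (-(1 / Δx) • (Flux j t - Flux (j - 1) t)) t)
    -- the numerical entropy flux `Q̂_{j+1/2}`
    (Qhat : ℤ → ℝ → ℝ)
    (hQhat : ∀ j t, Qhat j t =
      ⟪(1 / 2 : ℝ) • (V (U j t) + V (U (j + 1) t)), Fstar (U j t) (U (j + 1) t)⟫
        - (Ψ (U j t) + Ψ (U (j + 1) t)) / 2
        - (c / 2) * ⟪(1 / 2 : ℝ) • (V (U j t) + V (U (j + 1) t)),
            (B (Umap (Vhat j t))) (U (j + 1) t - U j t)⟫) :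
    -- exact discrete entropy balance
    ∀ (j : ℤ) (t : ℝ),
      deriv (fun s => S (U j s)) t + (Qhat j t - Qhat (j - 1) t) / Δx
        = -(c / (4 * Δx)) *
          (⟪V (U (j + 1) t) - V (U j t),
              (B (Umap (Vhat j t))) (UV (Vhat j t) (V (U (j + 1) t) - V (U j t)))⟫
            + ⟪V (U j t) - V (U (j - 1) t),
              (B (Umap (Vhat (j - 1) t)))
                (UV (Vhat (j - 1) t) (V (U j t) - V (U (j - 1) t)))⟫) := by
  intro j t
  have hm1 : (j - 1) + 1 = j := by ring
  have hd : HasDerivAt (fun s => S (U j s))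
      (⟪V (U j t), -(1 / Δx) • (Flux j t - Flux (j - 1) t)⟫) t := by
    have hg := (hV (U j t)).hasFDerivAt
    have h := hg.comp_hasDerivAt t (hscheme j t)
    simp at h ⊢
    exact h
  have hW := hVhat j t
  have hWm := hVhat (j - 1) t
  rw [hm1] at hWm
  have h1 := hEC (U j t) (U (j + 1) t)
  have h2 := hEC (U (j - 1) t) (U j t)
  rw [hd.deriv, hQhat j t, hQhat (j - 1) t, hFlux j t, hFlux (j - 1) t, hm1, hW, hWm]
  simp only [inner_sub_left, inner_sub_right, inner_add_left, inner_add_right,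
    real_inner_smul_left, real_inner_smul_right] at h1 h2 ⊢
  linear_combination (1/(2*Δx)) * h1 + (1/(2*Δx)) * h2
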